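/- Location of the second singular point: assume A = Φ * Ψ in AddMonoidAlgebra ℝ ℝ with data as in the context, and L ≥ 2, K ≥ 2 (hence N ≥ 2). Then the second smallest element β₂ of the support of A equals min(ζ₁ + κ₂, ζ₂ + κ₁). -/

import Mathlib

/-- Location of the second singular point: if `A = Φ * Ψ` with the leaf-peeling
singular data and `L ≥ 2`, `K ≥ 2` (hence `N ≥ 2`), then the second smallest
singular point satisfies `β₂ = min (ζ₁ + κ₂) (ζ₂ + κ₁)`. -/
theorem second_singular_point_location
    (N L K : ℕ) (hN : 2 ≤ N) (hL : 2 ≤ L) (hK : 2 ≤ K)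
    (β : Fin N → ℝ) (ζ : Fin L → ℝ) (κ : Fin K → ℝ)
    (hβ : StrictMono β) (hζ : StrictMono ζ) (hκ : StrictMono κ)
    (α : Fin N → ℝ) (φ : Fin L → ℝ) (ψ : Fin K → ℝ)
    (hα : ∀ n, α n ≠ 0) (hφ : ∀ l, 0 < φ l) (hψ : ∀ k, 0 < ψ k)
    (A Φ Ψ : AddMonoidAlgebra ℝ ℝ)
    (hA : A = ∑ n, AddMonoidAlgebra.single (β n) (α n))
    (hΦ : Φ = ∑ l, AddMonoidAlgebra.single (ζ l) (φ l))
    (hΨ : Ψ = ∑ k, AddMonoidAlgebra.single (κ k) (ψ k))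
    (hSing : A = Φ * Ψ) :
    β ⟨1, hN⟩ = min (ζ ⟨0, by omega⟩ + κ ⟨1, hK⟩) (ζ ⟨1, hL⟩ + κ ⟨0, by omega⟩) := by
  have hinj := hβ.injective
  -- coefficient of A
  have hAapp : ∀ x, A.coeff x = ∑ n, if β n = x then α n else 0 := by
    intro x
    rw [hA]
    rw [AddMonoidAlgebra.coeff_sum, Finsupp.finset_sum_apply]
    exact Finset.sum_congr rfl fun n _ => AddMonoidAlgebra.coeff_single_apply
  -- A at β n is α n
  have hAβ : ∀ n, A.coeff (β n) = α n := by
    intro n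
    rw [hAapp]
    rw [Finset.sum_eq_single n (fun m _ hm => if_neg fun h => hm (hinj h))
      (fun h => absurd (Finset.mem_univ n) h)]
    simp
  -- Φ * Ψ as a double sum of singles
  have hmul : Φ * Ψ = ∑ l, ∑ k, AddMonoidAlgebra.single (ζ l + κ k) (φ l * ψ k) := by
    rw [hΦ, hΨ, Finset.sum_mul_sum]
    refine Finset.sum_congr rfl fun l _ => Finset.sum_congr rfl fun k _ => ?_
    exact AddMonoidAlgebra.single_mul_single (ζ l) (κ k) (φ l) (ψ k)
  have hPapp : ∀ x, (Φ * Ψ).coeff x = ∑ l, ∑ k, (if ζ l + κ k = x then φ l * ψ k else 0) := by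
    intro x
    rw [hmul, AddMonoidAlgebra.coeff_sum, Finsupp.finset_sum_apply]
    refine Finset.sum_congr rfl fun l _ => ?_
    rw [AddMonoidAlgebra.coeff_sum, Finsupp.finset_sum_apply]
    exact Finset.sum_congr rfl fun k _ => AddMonoidAlgebra.coeff_single_apply
  -- membership equivalence between range β and the sumset
  have hmem : ∀ x : ℝ, (∃ n, β n = x) ↔ (∃ l k, ζ l + κ k = x) := by
    intro x
    constructor
    · rintro ⟨n, rfl⟩
      have h1 : (Φ * Ψ).coeff (β n) ≠ 0 := by
        rw [← hSing, hAβ]; exact hα n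
      by_contra hc
      push_neg at hc
      apply h1
      rw [hPapp]
      exact Finset.sum_eq_zero fun l _ => Finset.sum_eq_zero fun k _ =>
        if_neg (hc l k)
    · rintro ⟨l, k, rfl⟩
      have h2 : 0 < (Φ * Ψ).coeff (ζ l + κ k) := by
        rw [hPapp]
        refine Finset.sum_pos' (fun l' _ => Finset.sum_nonneg fun k' _ => ?_)
          ⟨l, Finset.mem_univ l, ?_⟩
        · split_ifs
          · exact le_of_lt (mul_pos (hφ _) (hψ _))
          · exact le_rfl
        · refine Finset.sum_pos' (fun k' _ => ?_) ⟨k, Finset.mem_univ k, ?_⟩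
          · split_ifs
            · exact le_of_lt (mul_pos (hφ _) (hψ _))
            · exact le_rfl
          · rw [if_pos rfl]
            exact mul_pos (hφ l) (hψ k)
      have h3 : A.coeff (ζ l + κ k) ≠ 0 := by rw [hSing]; exact ne_of_gt h2
      by_contra hc
      push_neg at hc
      apply h3
      rw [hAapp]
      exact Finset.sum_eq_zero fun n _ => if_neg (hc n)
  -- notation
  set n0 : Fin N := ⟨0, by omega⟩ with hn0
  set n1 : Fin N := ⟨1, hN⟩ with hn1
  set l0 : Fin L := ⟨0, by omega⟩ with hl0
  set l1 : Fin L := ⟨1, hL⟩ with hl1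
  set k0 : Fin K := ⟨0, by omega⟩ with hk0
  set k1 : Fin K := ⟨1, hK⟩ with hk1
  -- β 0 = ζ 0 + κ 0
  have hβ0 : β n0 = ζ l0 + κ k0 := by
    obtain ⟨l, k, hlk⟩ := (hmem (β n0)).mp ⟨n0, rfl⟩
    obtain ⟨m, hm⟩ := (hmem (ζ l0 + κ k0)).mpr ⟨l0, k0, rfl⟩
    have h1 : ζ l0 + κ k0 ≤ β n0 := by
      rw [← hlk]
      exact add_le_add (hζ.monotone (by simp [Fin.le_def, hl0]))
        (hκ.monotone (by simp [Fin.le_def, hk0]))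
    have h2 : β n0 ≤ ζ l0 + κ k0 := by
      rw [← hm]
      exact hβ.monotone (by simp [Fin.le_def, hn0])
    linarith
  have hβ01 : β n0 < β n1 := hβ (by simp [Fin.lt_def, hn0, hn1])
  have hζ01 : ζ l0 < ζ l1 := hζ (by simp [Fin.lt_def, hl0, hl1])
  have hκ01 : κ k0 < κ k1 := hκ (by simp [Fin.lt_def, hk0, hk1])
  set m : ℝ := min (ζ l0 + κ k1) (ζ l1 + κ k0) with hmdef
  -- m is in the sumset, so m = β n for some n, and m > β n0, so β n1 ≤ m
  have hm_mem : ∃ n, β n = m := by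
    rcases min_choice (ζ l0 + κ k1) (ζ l1 + κ k0) with h | h
    · exact (hmem m).mpr ⟨l0, k1, h.symm⟩
    · exact (hmem m).mpr ⟨l1, k0, h.symm⟩
  have hm_gt : β n0 < m := by
    rw [hβ0, hmdef]
    exact lt_min (by linarith) (by linarith)
  have hle1 : β n1 ≤ m := by
    obtain ⟨n, hn⟩ := hm_mem
    have hne : n ≠ n0 := by
      intro h; rw [h] at hn; exact absurd hn (ne_of_lt hm_gt)
    have : n1 ≤ n := by
      rw [Fin.le_def]
      simp only [hn1]
      have := Fin.val_ne_of_ne hne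
      simp [hn0] at this
      omega
    calc β n1 ≤ β n := hβ.monotone this
    _ = m := hn
  -- conversely m ≤ β n1
  have hle2 : m ≤ β n1 := by
    obtain ⟨l, k, hlk⟩ := (hmem (β n1)).mp ⟨n1, rfl⟩
    rcases Nat.eq_zero_or_pos l.val with hl' | hl'
    · rcases Nat.eq_zero_or_pos k.val with hk' | hk'
      · exfalso
        have hl'' : l = l0 := by rw [hl0]; exact Fin.ext hl'
        have hk'' : k = k0 := by rw [hk0]; exact Fin.ext hk'
        rw [hl'', hk'', ← hβ0] at hlk
        exact absurd hlk (ne_of_lt hβ01)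
      · have hl'' : l = l0 := by rw [hl0]; exact Fin.ext hl'
        have : κ k1 ≤ κ k := hκ.monotone (by rw [Fin.le_def]; simp [hk1]; omega)
        calc m ≤ ζ l0 + κ k1 := min_le_left _ _
        _ ≤ ζ l + κ k := by rw [hl'']; linarith
        _ = β n1 := hlk
    · have : ζ l1 ≤ ζ l := hζ.monotone (by rw [Fin.le_def]; simp [hl1]; omega)
      have hκ' : κ k0 ≤ κ k := hκ.monotone (by simp [Fin.le_def, hk0])
      calc m ≤ ζ l1 + κ k0 := min_le_right _ _
      _ ≤ ζ l + κ k := by linarith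
      _ = β n1 := hlk
  linarith
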